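/- Let ω be a primitive n-th root of unity and f holomorphic near 0 with f(ωz) = ωf(z), f(0) = 0, f'(0) = 1. Define F(w) = f(w^{1/n})^n (well-defined and holomorphic near 0 by the symmetry). Then for λ ∈ ℂ*, the map z ↦ λf(z) is linearizable at 0 (i.e., conjugate to w ↦ λw near 0 by a holomorphic map fixing 0 with derivative 1) if and only if w ↦ λⁿF(w) is linearizable at 0. -/

import Mathlib

open Filter Complex


open Topology FormalMultilinearSeries
open scoped ENNReal NNReal


lemma ev_comp {g : ℂ → ℂ} (hg : ContinuousAt g 0) (hg0 : g 0 = 0) {P : ℂ → Prop}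
    (h : ∀ᶠ w in nhds (0:ℂ), P w) : ∀ᶠ z in nhds (0:ℂ), P (g z) := by
  have hT := hg.tendsto
  rw [hg0] at hT
  exact hT.eventually h

lemma anal_dslope {f : ℂ → ℂ} (hf : AnalyticAt ℂ f 0) : AnalyticAt ℂ (dslope f 0) 0 := by
  obtain ⟨p, hp⟩ := hf
  exact hp.has_fpower_series_dslope_fslope.analyticAt

lemma rootLift {n : ℕ} (hn : 1 ≤ n) {G : ℂ → ℂ} (hGa : AnalyticAt ℂ G 0) (hG0 : G 0 = 0)
    (hG1 : deriv G 0 = 1) :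
    ∃ g : ℂ → ℂ, AnalyticAt ℂ g 0 ∧ g 0 = 0 ∧ deriv g 0 = 1 ∧
      (∀ᶠ z in nhds (0:ℂ), (g z) ^ n = G (z ^ n)) ∧ (∀ z : ℂ, z ≠ 0 → g z ≠ 0) := by
  have hn0 : (n : ℂ) ≠ 0 := Nat.cast_ne_zero.mpr (by omega)
  set u : ℂ → ℂ := dslope G 0 with hu_def
  have hu : AnalyticAt ℂ u 0 := anal_dslope hGa
  have hu0 : u 0 = 1 := by rw [hu_def, dslope_same, hG1]
  have hkey : ∀ w : ℂ, w * u w = G w := by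
    intro w
    have := sub_smul_dslope G 0 w
    rw [sub_zero, hG0, sub_zero, smul_eq_mul] at this
    exact this
  set v : ℂ → ℂ := fun w => Complex.exp ((n:ℂ)⁻¹ * Complex.log (u w)) with hv_def
  have hva : AnalyticAt ℂ v 0 :=
    (analyticAt_const.mul (hu.clog (by rw [hu0]; exact Complex.one_mem_slitPlane))).cexp
  have hv0 : v 0 = 1 := by rw [hv_def]; simp [hu0]
  have hvne : ∀ w, v w ≠ 0 := fun w => Complex.exp_ne_zero _
  have hvn : ∀ᶠ w in nhds (0:ℂ), (v w) ^ n = u w := by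
    filter_upwards [hu.continuousAt.eventually_ne (by rw [hu0]; exact one_ne_zero)] with w hw
    rw [hv_def]
    rw [← Complex.exp_nat_mul]
    rw [show (n:ℂ) * ((n:ℂ)⁻¹ * Complex.log (u w)) = Complex.log (u w) by field_simp]
    exact Complex.exp_log hw
  have hpow : AnalyticAt ℂ (fun z : ℂ => z ^ n) 0 := (analyticAt_id).pow n
  have h0n : (0:ℂ) ^ n = 0 := zero_pow (by omega)
  refine ⟨fun z => z * v (z ^ n), ?_, by simp, ?_, ?_, fun z hz => mul_ne_zero hz (hvne _)⟩
  · apply analyticAt_id.mul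
    have heq : ((fun z : ℂ => z ^ n) 0) = 0 := by simp [h0n]
    have hva' : AnalyticAt ℂ v ((fun z : ℂ => z ^ n) 0) := by rw [heq]; exact hva
    exact AnalyticAt.comp (f := fun z : ℂ => z ^ n) (x := (0:ℂ)) hva' hpow
  · have hinner : HasDerivAt (fun z : ℂ => z ^ n) ((n:ℂ) * 0 ^ (n - 1)) 0 := hasDerivAt_pow n 0
    have heq : ((0:ℂ) ^ n) = 0 := h0n
    have hvd : DifferentiableAt ℂ v ((0:ℂ) ^ n) := by rw [heq]; exact hva.differentiableAt
    have houter : HasDerivAt v (deriv v ((0:ℂ) ^ n)) ((0:ℂ) ^ n) := hvd.hasDerivAt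
    have hc : HasDerivAt (fun z : ℂ => v (z ^ n)) (deriv v ((0:ℂ) ^ n) * ((n:ℂ) * 0 ^ (n - 1))) 0 :=
      HasDerivAt.comp (h₂ := v) (h := fun z : ℂ => z ^ n) 0 houter hinner
    have hm : HasDerivAt (fun z : ℂ => z * v (z ^ n))
        (1 * v ((0:ℂ) ^ n) + 0 * (deriv v ((0:ℂ) ^ n) * ((n:ℂ) * 0 ^ (n - 1)))) 0 :=
      (hasDerivAt_id 0).mul hc
    have := hm.deriv
    rw [this]
    simp [h0n, hv0]
  · have hcont : ContinuousAt (fun z : ℂ => z ^ n) 0 := hpow.continuousAt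
    filter_upwards [ev_comp hcont h0n hvn] with z hz
    rw [mul_pow, hz, hkey]

lemma surjPow {n : ℕ} (hn : 1 ≤ n) {P : ℂ → Prop} (h : ∀ᶠ z in nhds (0:ℂ), P (z ^ n)) :
    ∀ᶠ w in nhds (0:ℂ), P w := by
  rw [Metric.eventually_nhds_iff] at h ⊢
  obtain ⟨ε, hε, hP⟩ := h
  refine ⟨ε ^ n, pow_pos hε n, fun {w} hw => ?_⟩
  obtain ⟨z, hz⟩ := IsAlgClosed.exists_pow_nat_eq w (show 0 < n by omega)
  have hzd : dist z 0 < ε := by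
    rw [dist_zero_right] at hw ⊢
    have h2 : ‖z‖ ^ n < ε ^ n := by rw [← norm_pow, hz]; exact hw
    exact lt_of_pow_lt_pow_left₀ n hε.le h2
  have := hP hzd
  rwa [hz] at this


lemma rigidity {n : ℕ} (hn : 1 ≤ n) {A B : ℂ → ℂ} {c : ℂ} (hc : c ≠ 0)
    (hA : HasDerivAt A c 0) (hA0 : A 0 = 0) (hB : HasDerivAt B c 0) (hB0 : B 0 = 0)
    (hpow : ∀ᶠ z in nhds (0:ℂ), (A z) ^ n = (B z) ^ n)
    (hBne : ∀ᶠ z in nhds (0:ℂ), z ≠ 0 → B z ≠ 0) :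
    ∀ᶠ z in nhds (0:ℂ), A z = B z := by
  have hn0 : 0 < n := hn
  set r : ℂ → ℂ := fun z => A z / B z with hr_def
  have htA : Tendsto (fun z => A z / z) (nhdsWithin 0 {(0:ℂ)}ᶜ) (nhds c) := by
    have := hasDerivAt_iff_tendsto_slope.mp hA
    apply this.congr'
    filter_upwards [self_mem_nhdsWithin] with z hz
    rw [slope_def_field, hA0, sub_zero, sub_zero]
  have htB : Tendsto (fun z => B z / z) (nhdsWithin 0 {(0:ℂ)}ᶜ) (nhds c) := by
    have := hasDerivAt_iff_tendsto_slope.mp hB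
    apply this.congr'
    filter_upwards [self_mem_nhdsWithin] with z hz
    rw [slope_def_field, hB0, sub_zero, sub_zero]
  have htr : Tendsto r (nhdsWithin 0 {(0:ℂ)}ᶜ) (nhds 1) := by
    have h1 : Tendsto (fun z => (A z / z) / (B z / z)) (nhdsWithin 0 {(0:ℂ)}ᶜ) (nhds (c / c)) :=
      htA.div htB hc
    rw [div_self hc] at h1
    apply h1.congr'
    filter_upwards [self_mem_nhdsWithin] with z hz
    have hz' : z ≠ 0 := hz
    by_cases hBz : B z = 0
    · simp [hr_def, hBz]
    · rw [hr_def]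
      field_simp
  set T : Finset ℂ := ((Polynomial.nthRoots n (1:ℂ)).toFinset).erase 1 with hT_def
  have hev1 : ∀ᶠ z in nhdsWithin 0 {(0:ℂ)}ᶜ, ∀ ζ ∈ T, dist (r z) 1 < dist ζ 1 := by
    rw [eventually_all_finset]
    intro ζ hζ
    have hζ1 : ζ ≠ 1 := (Finset.mem_erase.mp hζ).1
    have hd : 0 < dist ζ 1 := dist_pos.mpr hζ1
    have := htr.eventually (Metric.ball_mem_nhds (1:ℂ) hd)
    filter_upwards [this] with z hz
    exact Metric.mem_ball.mp hz
  have hev2 : ∀ᶠ z in nhdsWithin 0 {(0:ℂ)}ᶜ, (r z) ^ n = 1 ∧ B z ≠ 0 := by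
    filter_upwards [eventually_nhdsWithin_of_eventually_nhds hpow,
      eventually_nhdsWithin_of_eventually_nhds hBne, self_mem_nhdsWithin] with z h1 h2 h3
    have hBz : B z ≠ 0 := h2 h3
    refine ⟨?_, hBz⟩
    rw [hr_def]
    simp only [div_pow, h1]
    exact div_self (pow_ne_zero n hBz)
  have hfin : ∀ᶠ z in nhdsWithin 0 {(0:ℂ)}ᶜ, A z = B z := by
    filter_upwards [hev1, hev2] with z h1 h2
    have hr1 : r z = 1 := by
      by_contra hne
      have hmem : r z ∈ T := by
        rw [hT_def, Finset.mem_erase]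
        refine ⟨hne, Multiset.mem_toFinset.mpr ?_⟩
        rw [Polynomial.mem_nthRoots hn0]
        exact h2.1
      exact absurd (h1 _ hmem) (lt_irrefl _)
    have := (div_eq_one_iff_eq h2.2).mp hr1
    exact this
  rw [eventually_nhdsWithin_iff] at hfin
  filter_upwards [hfin] with z hz
  by_cases h : z = 0
  · rw [h, hA0, hB0]
  · exact hz h


lemma descent {n : ℕ} (hn : 1 ≤ n) {ω : ℂ} (hω : IsPrimitiveRoot ω n) {ψ : ℂ → ℂ}
    (hψ : AnalyticAt ℂ ψ 0) (hs : ∀ z : ℂ, ψ (ω * z) = ψ z) :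
    ∃ Ψ : ℂ → ℂ, AnalyticAt ℂ Ψ 0 ∧ Ψ 0 = ψ 0 ∧ ∀ᶠ z in nhds (0:ℂ), Ψ (z ^ n) = ψ z := by
  have hn0 : n ≠ 0 := by omega
  obtain ⟨p, hp⟩ := hψ
  obtain ⟨r, hr⟩ := id hp
  have hων : ‖ω‖₊ = 1 := Complex.nnnorm_eq_one_of_pow_eq_one hω.pow_eq_one hn0
  -- the series of z ↦ ψ (ω * z)
  have hqcoeff : ∀ k, FormalMultilinearSeries.coeff
      (fun k => ContinuousMultilinearMap.mkPiRing ℂ (Fin k) (ω ^ k * p.coeff k)) k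
      = ω ^ k * p.coeff k := by
    intro k
    show (ContinuousMultilinearMap.mkPiRing ℂ (Fin k) (ω ^ k * p.coeff k)) 1 = _
    simp [ContinuousMultilinearMap.mkPiRing_apply]
  set q : FormalMultilinearSeries ℂ ℂ ℂ :=
    fun k => ContinuousMultilinearMap.mkPiRing ℂ (Fin k) (ω ^ k * p.coeff k) with hqdef
  have hqnorm : ∀ k, ‖q k‖ = ‖p k‖ := by
    intro k
    rw [norm_apply_eq_norm_coef, norm_apply_eq_norm_coef, hqcoeff, norm_mul, norm_pow]
    have : ‖ω‖ = 1 := congr_arg Subtype.val hων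
    rw [this, one_pow, one_mul]
  have hq : HasFPowerSeriesOnBall (fun z => ψ (ω * z)) q 0 r := by
    refine ⟨?_, hr.r_pos, ?_⟩
    · apply ENNReal.le_of_forall_nnreal_lt
      intro t ht
      obtain ⟨C, -, hC⟩ := p.norm_mul_pow_le_of_lt_radius (lt_of_lt_of_le ht hr.r_le)
      exact q.le_radius_of_bound C fun k => by rw [hqnorm]; exact hC k
    · intro y hy
      have hωy : ω * y ∈ Metric.eball (0:ℂ) r := by
        rw [mem_emetric_ball_zero_iff] at hy ⊢
        rwa [enorm_mul, enorm_eq_nnnorm ω, hων, ENNReal.coe_one, one_mul]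
      have := hr.hasSum hωy
      rw [zero_add] at this ⊢
      convert this using 2 with k
      rw [apply_eq_pow_smul_coeff, apply_eq_pow_smul_coeff, hqcoeff, smul_eq_mul, smul_eq_mul,
        mul_pow]
      ring
  have hq' : HasFPowerSeriesAt ψ q 0 :=
    HasFPowerSeriesAt.congr ⟨r, hq⟩ (Eventually.of_forall hs)
  have hpq : q = p := hq'.eq_formalMultilinearSeries hp
  have hcoeff : ∀ k, ¬ (n ∣ k) → p.coeff k = 0 := by
    intro k hk
    have h1 : ω ^ k * p.coeff k = p.coeff k := by rw [← hqcoeff, hpq]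
    have h2 : ω ^ k ≠ 1 := fun h => hk ((hω.pow_eq_one_iff_dvd k).mp h)
    have h3 := sub_eq_zero.mpr h1
    rw [show ω ^ k * p.coeff k - p.coeff k = (ω ^ k - 1) * p.coeff k by ring] at h3
    rcases mul_eq_zero.mp h3 with h | h
    · exact absurd (sub_eq_zero.mp h) h2
    · exact h
  -- the descended series
  have hQcoeff : ∀ m, FormalMultilinearSeries.coeff
      (fun m => ContinuousMultilinearMap.mkPiRing ℂ (Fin m) (p.coeff (n * m))) m
      = p.coeff (n * m) := by
    intro m
    show (ContinuousMultilinearMap.mkPiRing ℂ (Fin m) (p.coeff (n * m))) 1 = _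
    simp [ContinuousMultilinearMap.mkPiRing_apply]
  set Q : FormalMultilinearSeries ℂ ℂ ℂ :=
    fun m => ContinuousMultilinearMap.mkPiRing ℂ (Fin m) (p.coeff (n * m)) with hQdef
  have hQr : 0 < Q.radius := by
    obtain ⟨t, ht0, htr⟩ := ENNReal.lt_iff_exists_nnreal_btwn.mp hp.radius_pos
    have ht0' : 0 < t := ENNReal.coe_pos.mp ht0
    obtain ⟨C, -, hC⟩ := p.norm_mul_pow_le_of_lt_radius htr
    have hb : ∀ m, ‖Q m‖ * ((t ^ n : ℝ≥0) : ℝ) ^ m ≤ C := by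
      intro m
      have he : ‖Q m‖ = ‖p (n * m)‖ := by
        rw [norm_apply_eq_norm_coef, norm_apply_eq_norm_coef, hQcoeff]
      rw [he]
      calc ‖p (n * m)‖ * ((t ^ n : ℝ≥0) : ℝ) ^ m = ‖p (n * m)‖ * (t : ℝ) ^ (n * m) := by
            push_cast; rw [← pow_mul]
        _ ≤ C := hC (n * m)
    calc (0 : ℝ≥0∞) < ((t ^ n : ℝ≥0) : ℝ≥0∞) := by
          exact_mod_cast pow_pos ht0' n
      _ ≤ Q.radius := Q.le_radius_of_bound C hb
  refine ⟨Q.sum, (Q.hasFPowerSeriesOnBall hQr).analyticAt, ?_, ?_⟩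
  · have hQs : HasFPowerSeriesAt Q.sum Q 0 := ⟨Q.radius, Q.hasFPowerSeriesOnBall hQr⟩
    have e1 : Q 0 1 = Q.sum 0 := hQs.coeff_zero 1
    have e2 : p 0 1 = ψ 0 := hp.coeff_zero 1
    have e3 : Q.coeff 0 = p.coeff (n * 0) := hQcoeff 0
    rw [Nat.mul_zero] at e3
    show Q.sum 0 = ψ 0
    rw [← e1, ← e2]
    exact e3
  · filter_upwards [EMetric.ball_mem_nhds (0:ℂ) hr.r_pos] with z hz
    have hsum : HasSum (fun k => z ^ k • p.coeff k) (ψ z) := by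
      have := hr.hasSum hz
      rw [zero_add] at this
      simpa only [apply_eq_pow_smul_coeff] using this
    have hinj : Function.Injective (fun m : ℕ => n * m) := fun a b h => by
      simpa [hn0] using h
    have hvan : ∀ k, k ∉ Set.range (fun m : ℕ => n * m) → z ^ k • p.coeff k = 0 := by
      intro k hk
      have : ¬ n ∣ k := fun ⟨c, hc⟩ => hk ⟨c, hc.symm⟩
      rw [hcoeff k this, smul_zero]
    have hsum2 : HasSum (fun m => Q m fun _ => z ^ n) (ψ z) := by
      have h4 := (hinj.hasSum_iff hvan).mpr hsum
      convert h4 using 2 with m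
      rw [apply_eq_pow_smul_coeff, hQcoeff]
      simp only [Function.comp]
      rw [← pow_mul]
    simpa [FormalMultilinearSeries.sum] using hsum2.tsum_eq


/-- `G` is linearizable at `0` with multiplier `μ`: conjugate to `w ↦ μ w` near `0`
by a holomorphic map fixing `0` with derivative `1`. -/
def LinearizableAtZero (G : ℂ → ℂ) (μ : ℂ) : Prop :=
  ∃ h : ℂ → ℂ, AnalyticAt ℂ h 0 ∧ h 0 = 0 ∧ deriv h 0 = 1 ∧
    ∀ᶠ z in nhds (0 : ℂ), h (G z) = μ * h z

theorem stmt17 (n : ℕ) (hn : 1 ≤ n) (ω : ℂ) (hω : IsPrimitiveRoot ω n)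
    (f F : ℂ → ℂ)
    (hfa : AnalyticAt ℂ f 0) (hf0 : f 0 = 0) (hf1 : deriv f 0 = 1)
    (hsym : ∀ᶠ z in nhds (0 : ℂ), f (ω * z) = ω * f z)
    (hFa : AnalyticAt ℂ F 0) (hF0 : F 0 = 0) (hF1 : deriv F 0 = 1)
    (hFf : ∀ᶠ z in nhds (0 : ℂ), F (z ^ n) = (f z) ^ n)
    (lam : ℂ) (hlam : lam ≠ 0) :
    LinearizableAtZero (fun z => lam * f z) lam ↔
      LinearizableAtZero (fun w => lam ^ n * F w) (lam ^ n) := by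
  have hn0 : n ≠ 0 := by omega
  have hnc : (n : ℂ) ≠ 0 := Nat.cast_ne_zero.mpr hn0
  have hωn : ω ^ n = 1 := hω.pow_eq_one
  have hω0 : ω ≠ 0 := hω.ne_zero hn0
  have hcontf : ContinuousAt (fun z : ℂ => lam * f z) 0 :=
    continuousAt_const.mul hfa.continuousAt
  have hcontf0 : (fun z : ℂ => lam * f z) 0 = 0 := by simp [hf0]
  have hcontp : ContinuousAt (fun z : ℂ => z ^ n) 0 := (continuous_pow n).continuousAt
  have hcontp0 : (fun z : ℂ => z ^ n) 0 = 0 := by simp [zero_pow hn0]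
  constructor
  · rintro ⟨h, hha, hh0, hh1, hhc⟩
    -- symmetrized linearizer
    set ht : ℂ → ℂ := fun z => (n:ℂ)⁻¹ * ∑ k ∈ Finset.range n, (ω ^ k)⁻¹ * h (ω ^ k * z)
      with hht
    have hhta : AnalyticAt ℂ ht 0 := by
      apply analyticAt_const.mul
      apply Finset.analyticAt_fun_sum
      intro k _
      have hin : AnalyticAt ℂ (fun z : ℂ => ω ^ k * z) 0 := analyticAt_const.mul analyticAt_id
      have heq : ((fun z : ℂ => ω ^ k * z) 0) = 0 := by simp
      have h2 : AnalyticAt ℂ h ((fun z : ℂ => ω ^ k * z) 0) := by rw [heq]; exact hha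
      exact analyticAt_const.mul
        (AnalyticAt.comp (f := fun z : ℂ => ω ^ k * z) (x := (0:ℂ)) h2 hin)
    have hht0 : ht 0 = 0 := by simp [hht, hh0]
    have hhd : HasDerivAt h 1 0 := by
      have := hha.differentiableAt.hasDerivAt; rwa [hh1] at this
    have hterm : ∀ k : ℕ, HasDerivAt (fun z : ℂ => (ω ^ k)⁻¹ * h (ω ^ k * z)) 1 0 := by
      intro k
      have hωk : (ω : ℂ) ^ k ≠ 0 := pow_ne_zero k hω0
      have hin : HasDerivAt (fun z : ℂ => ω ^ k * z) (ω ^ k) 0 := by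
        simpa using (hasDerivAt_id (0:ℂ)).const_mul (ω ^ k)
      have hout : HasDerivAt h 1 (ω ^ k * 0) := by rwa [mul_zero]
      have hcomp := (HasDerivAt.comp 0 hout hin).const_mul ((ω ^ k)⁻¹)
      rw [one_mul, inv_mul_cancel₀ hωk] at hcomp
      exact hcomp
    have hsumd : HasDerivAt
        (fun z : ℂ => ∑ k ∈ Finset.range n, (ω ^ k)⁻¹ * h (ω ^ k * z)) (n : ℂ) 0 := by
      have := HasDerivAt.fun_sum (fun k (_ : k ∈ Finset.range n) => hterm k)
      simpa using this
    have hhtd : HasDerivAt ht 1 0 := by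
      have hd := hsumd.const_mul ((n:ℂ)⁻¹)
      rw [inv_mul_cancel₀ hnc] at hd
      exact hd
    have hht1 : deriv ht 0 = 1 := hhtd.deriv
    -- equivariance
    have hequi : ∀ z : ℂ, ht (ω * z) = ω * ht z := by
      intro z
      set t : ℕ → ℂ := fun j => (ω ^ j)⁻¹ * h (ω ^ j * z) with htt
      have h1 : ∀ k : ℕ, (ω ^ k)⁻¹ * h (ω ^ k * (ω * z)) = ω * t (k+1) := by
        intro k
        have hωk : (ω : ℂ) ^ k ≠ 0 := pow_ne_zero k hω0
        rw [htt]
        simp only [pow_succ]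
        rw [show ω ^ k * ω * z = ω ^ k * (ω * z) by ring]
        rw [mul_inv]
        field_simp
      have hshift : ∑ k ∈ Finset.range n, t (k+1) = ∑ k ∈ Finset.range n, t k := by
        have e1 := Finset.sum_range_succ' t n
        have e2 := Finset.sum_range_succ t n
        have e3 : t n = t 0 := by rw [htt]; simp [hωn]
        have e4 := e1.symm.trans e2
        rw [e3] at e4
        exact add_right_cancel e4
      calc ht (ω * z) = (n:ℂ)⁻¹ * ∑ k ∈ Finset.range n, ω * t (k+1) := by
            rw [hht]
            exact congrArg _ (Finset.sum_congr rfl fun k _ => h1 k)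
        _ = (n:ℂ)⁻¹ * (ω * ∑ k ∈ Finset.range n, t (k+1)) := by
            congr 1
            exact (Finset.mul_sum _ _ _).symm
        _ = (n:ℂ)⁻¹ * (ω * ∑ k ∈ Finset.range n, t k) := by rw [hshift]
        _ = ω * ht z := by rw [hht, htt]; ring
    -- conjugacy events transported to ω^k z
    have hE : ∀ k : ℕ, ∀ᶠ z in nhds (0:ℂ), f (ω ^ k * z) = ω ^ k * f z := by
      intro k
      induction k with
      | zero => simp
      | succ k ih =>
        have hcont : ContinuousAt (fun z : ℂ => ω * z) 0 :=
          continuousAt_const.mul continuousAt_id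
        have h0 : (fun z : ℂ => ω * z) 0 = 0 := by simp
        have ih' := ev_comp hcont h0 ih
        filter_upwards [ih', hsym] with z e1 e2
        calc f (ω ^ (k+1) * z) = f (ω ^ k * (ω * z)) := by
              rw [show ω ^ (k+1) * z = ω ^ k * (ω * z) by ring]
          _ = ω ^ k * f (ω * z) := e1
          _ = ω ^ k * (ω * f z) := by rw [e2]
          _ = ω ^ (k+1) * f z := by ring
    have hhtc : ∀ᶠ z in nhds (0:ℂ), ht (lam * f z) = lam * ht z := by
      have hall : ∀ᶠ z in nhds (0:ℂ), ∀ k ∈ Finset.range n,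
          (f (ω ^ k * z) = ω ^ k * f z ∧ h (lam * f (ω ^ k * z)) = lam * h (ω ^ k * z)) := by
        rw [eventually_all_finset]
        intro k _
        have hcont : ContinuousAt (fun z : ℂ => ω ^ k * z) 0 :=
          continuousAt_const.mul continuousAt_id
        have h0 : (fun z : ℂ => ω ^ k * z) 0 = 0 := by simp
        exact (hE k).and (ev_comp hcont h0 hhc)
      filter_upwards [hall] with z hz
      have hsum : ∑ k ∈ Finset.range n, (ω ^ k)⁻¹ * h (ω ^ k * (lam * f z))
          = ∑ k ∈ Finset.range n, lam * ((ω ^ k)⁻¹ * h (ω ^ k * z)) := by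
        apply Finset.sum_congr rfl
        intro k hk
        obtain ⟨e1, e2⟩ := hz k hk
        rw [show ω ^ k * (lam * f z) = lam * (ω ^ k * f z) by ring, ← e1, e2]
        ring
      rw [hht]
      simp only
      rw [hsum, ← Finset.mul_sum]
      ring
    -- descend (dslope ht 0)^n
    set φ : ℂ → ℂ := dslope ht 0 with hφdef
    have hφa : AnalyticAt ℂ φ 0 := anal_dslope hhta
    have hφ0 : φ 0 = 1 := by rw [hφdef, dslope_same, hht1]
    have hφkey : ∀ z : ℂ, z * φ z = ht z := by
      intro z
      have := sub_smul_dslope ht 0 z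
      rw [sub_zero, hht0, sub_zero, smul_eq_mul] at this
      exact this
    have hφinv : ∀ z : ℂ, φ (ω * z) = φ z := by
      intro z
      by_cases hz : z = 0
      · rw [hz, mul_zero]
      · have h1 : (ω * z) * φ (ω * z) = ht (ω * z) := hφkey _
        rw [hequi z, ← hφkey z] at h1
        rw [mul_assoc] at h1
        rw [show ω * (z * φ z) = ω * (z * φ z) from rfl] at h1
        have h2 := mul_left_cancel₀ hω0 h1
        exact mul_left_cancel₀ hz h2
    obtain ⟨Φ, hΦa, hΦ0, hΦev⟩ := descent hn hω (hφa.pow n)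
      (fun z => by rw [Pi.pow_apply, Pi.pow_apply, hφinv])
    rw [Pi.pow_apply, hφ0, one_pow] at hΦ0
    refine ⟨fun w => w * Φ w, analyticAt_id.mul hΦa, by simp, ?_, ?_⟩
    · have hd : HasDerivAt (fun w : ℂ => w * Φ w)
          (1 * Φ 0 + 0 * deriv Φ 0) 0 :=
        (hasDerivAt_id 0).mul (hΦa.differentiableAt.hasDerivAt)
      rw [hd.deriv, hΦ0]
      ring
    · have hkeyH : ∀ᶠ z in nhds (0:ℂ), z ^ n * Φ (z ^ n) = (ht z) ^ n := by
        filter_upwards [hΦev] with z hz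
        rw [hz, Pi.pow_apply, ← mul_pow, hφkey]
      have hpull : ∀ᶠ z in nhds (0:ℂ),
          (lam * f z) ^ n * Φ ((lam * f z) ^ n) = (ht (lam * f z)) ^ n :=
        ev_comp hcontf hcontf0 hkeyH
      have hPz : ∀ᶠ z in nhds (0:ℂ),
          (lam ^ n * F (z ^ n)) * Φ (lam ^ n * F (z ^ n)) = lam ^ n * (z ^ n * Φ (z ^ n)) := by
        filter_upwards [hFf, hhtc, hkeyH, hpull] with z e1 e2 e3 e4
        calc (lam ^ n * F (z ^ n)) * Φ (lam ^ n * F (z ^ n))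
            = ((lam * f z) ^ n) * Φ ((lam * f z) ^ n) := by rw [e1, mul_pow]
          _ = (ht (lam * f z)) ^ n := e4
          _ = (lam * ht z) ^ n := by rw [e2]
          _ = lam ^ n * (ht z) ^ n := mul_pow lam (ht z) n
          _ = lam ^ n * (z ^ n * Φ (z ^ n)) := by rw [e3]
      exact surjPow hn
        (P := fun w => (lam ^ n * F w) * Φ (lam ^ n * F w) = lam ^ n * (w * Φ w)) hPz
  · rintro ⟨H, hHa, hH0, hH1, hHc⟩
    obtain ⟨k, hka, hk0, hk1, hkpow, hkne⟩ := rootLift hn hHa hH0 hH1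
    refine ⟨k, hka, hk0, hk1, ?_⟩
    have hfd : HasDerivAt f 1 0 := by
      have := hfa.differentiableAt.hasDerivAt; rwa [hf1] at this
    have hkd : HasDerivAt k 1 0 := by
      have := hka.differentiableAt.hasDerivAt; rwa [hk1] at this
    have hinner : HasDerivAt (fun z : ℂ => lam * f z) lam 0 := by
      simpa using hfd.const_mul lam
    have hkd' : HasDerivAt k 1 ((fun z : ℂ => lam * f z) 0) := by rwa [hcontf0]
    have hA : HasDerivAt (fun z : ℂ => k (lam * f z)) lam 0 := by
      have := HasDerivAt.comp 0 hkd' hinner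
      rw [one_mul] at this
      exact this
    have hB : HasDerivAt (fun z : ℂ => lam * k z) lam 0 := by
      simpa using hkd.const_mul lam
    have hA0 : k (lam * f 0) = 0 := by rw [hf0, mul_zero, hk0]
    have hB0 : lam * k 0 = 0 := by rw [hk0, mul_zero]
    have hpull1 : ∀ᶠ z in nhds (0:ℂ), (k (lam * f z)) ^ n = H ((lam * f z) ^ n) :=
      ev_comp hcontf hcontf0 hkpow
    have hpull2 : ∀ᶠ z in nhds (0:ℂ), H (lam ^ n * F (z ^ n)) = lam ^ n * H (z ^ n) :=
      ev_comp hcontp hcontp0 hHc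
    have hev : ∀ᶠ z in nhds (0:ℂ), (k (lam * f z)) ^ n = (lam * k z) ^ n := by
      filter_upwards [hpull1, hpull2, hFf, hkpow] with z e1 e2 e3 e4
      calc (k (lam * f z)) ^ n = H ((lam * f z) ^ n) := e1
        _ = H (lam ^ n * F (z ^ n)) := by rw [mul_pow, e3]
        _ = lam ^ n * H (z ^ n) := e2
        _ = lam ^ n * (k z) ^ n := by rw [e4]
        _ = (lam * k z) ^ n := (mul_pow lam (k z) n).symm
    have hBne : ∀ᶠ z in nhds (0:ℂ), z ≠ 0 → lam * k z ≠ 0 :=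
      Eventually.of_forall fun z hz => mul_ne_zero hlam (hkne z hz)
    exact rigidity hn hlam hA hA0 hB hB0 hev hBne
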